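/- (Weak duality.) Let q ∈ Δ, let A be an n × m real matrix, b ∈ ℝᵐ, and set Ω = {p ∈ ℝⁿ : Aᵀp = b}. Fix λ ∈ ℝᵐ and suppose p_λ ∈ Δ satisfies ∇f(p_λ) = ∇f(q) − Aλ. Then for every p ∈ Ω ∩ cl(Δ), D_f(p_λ, q) + ⟨Aᵀp_λ − b, λ⟩ ≤ D_f(p, q). -/

import Mathlib

open scoped RealInnerProductSpace

/-- Bregman distance nonnegativity: for `f` convex on `closure Δ`, differentiable on open `Δ`,
`plam ∈ Δ`, `p ∈ closure Δ`, we have `⟪∇f plam, p - plam⟫ ≤ f p - f plam`. -/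
lemma bregman_inner_le {n : ℕ} {Δ : Set (EuclideanSpace ℝ (Fin n))}
    (hopen : IsOpen Δ)
    {f : EuclideanSpace ℝ (Fin n) → ℝ}
    (hdiff : DifferentiableOn ℝ f Δ)
    (hcv : ConvexOn ℝ (closure Δ) f)
    {plam p : EuclideanSpace ℝ (Fin n)} (hplam : plam ∈ Δ) (hp : p ∈ closure Δ) :
    ⟪gradient f plam, p - plam⟫ ≤ f p - f plam := by
  set v : EuclideanSpace ℝ (Fin n) := p - plam with hv
  have hdA : DifferentiableAt ℝ f plam := hdiff.differentiableAt (hopen.mem_nhds hplam)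
  have hgA : HasGradientAt f (gradient f plam) plam := hdA.hasGradientAt
  have hfA : HasFDerivAt f ((InnerProductSpace.toDual ℝ _) (gradient f plam)) plam :=
    hasGradientAt_iff_hasFDerivAt.mp hgA
  -- the line from plam to p
  set L : ℝ → EuclideanSpace ℝ (Fin n) := fun t => t • v + plam with hL
  have hL0 : L 0 = plam := by simp [hL]
  have hL1 : L 1 = p := by simp [hL, hv]
  have hLd : HasDerivAt L v 0 := by
    simpa [hL] using ((hasDerivAt_id (0:ℝ)).smul_const v).add_const plam
  have hgd : HasDerivAt (f ∘ L) (⟪gradient f plam, v⟫) 0 := by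
    have hfA' : HasFDerivAt f ((InnerProductSpace.toDual ℝ _) (gradient f plam)) (L 0) := by
      rw [hL0]; exact hfA
    have := hfA'.comp_hasDerivAt (x := (0:ℝ)) hLd
    simpa [InnerProductSpace.toDual_apply_apply] using this
  -- convexity of f ∘ L on Icc 0 1
  have hmem : ∀ t ∈ Set.Icc (0:ℝ) 1, L t ∈ closure Δ := by
    intro t ht
    have hpl : plam ∈ closure Δ := subset_closure hplam
    have := hcv.1 hpl hp (show (0:ℝ) ≤ 1 - t by linarith [ht.2]) ht.1 (show (1 - t) + t = 1 by ring)
    have heq : L t = (1 - t) • plam + t • p := by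
      simp only [hL, hv]; module
    rw [heq]; exact this
  have hconvL : ConvexOn ℝ (Set.Icc (0:ℝ) 1) (f ∘ L) := by
    constructor
    · exact convex_Icc 0 1
    · intro x hx y hy a b ha hb hab
      have h1 : L (a * x + b * y) = a • L x + b • L y := by
        have h2 : a • L x + b • L y = (a * x + b * y) • v + (a + b) • plam := by
          simp only [hL]; module
        rw [h2, hab, one_smul]
      have := hcv.2 (hmem x hx) (hmem y hy) ha hb hab
      simpa [Function.comp, h1] using this
  have hslope := hconvL.le_slope_of_hasDerivAt (x := 0) (y := 1)
    (Set.mem_Icc.mpr ⟨le_refl 0, zero_le_one⟩) (Set.mem_Icc.mpr ⟨zero_le_one, le_refl 1⟩)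
    one_pos hgd
  have : slope (f ∘ L) 0 1 = f p - f plam := by
    simp [slope, Function.comp, hL0, hL1]
  rw [this] at hslope
  exact hslope

/-- (Weak duality.) For `q ∈ Δ`, `λ ∈ ℝᵐ`, and `Ω = {p : Aᵀp = b}`:
if `p_λ ∈ Δ` satisfies `∇f(p_λ) = ∇f(q) − Aλ`, then for every `p ∈ Ω ∩ cl(Δ)`,
`D_f(p_λ, q) + ⟪Aᵀp_λ − b, λ⟫ ≤ D_f(p, q)`. -/
theorem bregman_weak_duality {n m : ℕ} {Δ : Set (EuclideanSpace ℝ (Fin n))}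
    (hne : Δ.Nonempty) (hopen : IsOpen Δ) (hconv : Convex ℝ Δ)
    {f : EuclideanSpace ℝ (Fin n) → ℝ}
    (hcont : ContinuousOn f (closure Δ))
    (hdiff : DifferentiableOn ℝ f Δ)
    (hsc : StrictConvexOn ℝ (closure Δ) f)
    {D : EuclideanSpace ℝ (Fin n) → EuclideanSpace ℝ (Fin n) → ℝ}
    (hD : ∀ p q, D p q = f p - f q - ⟪gradient f q, p - q⟫)
    {q : EuclideanSpace ℝ (Fin n)} (hq : q ∈ Δ)
    (A : Matrix (Fin n) (Fin m) ℝ) (b lam : Fin m → ℝ)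
    {plam : EuclideanSpace ℝ (Fin n)} (hplam : plam ∈ Δ)
    (hgrad : ∀ i, gradient f plam i = gradient f q i - ∑ j, A i j * lam j) :
    ∀ p : EuclideanSpace ℝ (Fin n), (∀ j, ∑ i, A i j * p i = b j) → p ∈ closure Δ →
      D plam q + ∑ j, (∑ i, A i j * plam i - b j) * lam j ≤ D p q := by
  intro p hAp hp
  have key : ⟪gradient f plam, p - plam⟫ ≤ f p - f plam :=
    bregman_inner_le hopen hdiff hsc.convexOn hplam hp
  rw [hD, hD]
  -- rewrite inner products as sums
  have hip : ∀ (x y : EuclideanSpace ℝ (Fin n)), ⟪x, y⟫ = ∑ i, x i * y i := by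
    intro x y
    simp [PiLp.inner_apply, RCLike.inner_apply, mul_comm]
  rw [hip] at key ⊢
  rw [hip]
  -- expand everything into coordinate sums
  have hsub : ∀ (x y : EuclideanSpace ℝ (Fin n)) (i : Fin n), (x - y) i = x i - y i := by
    intro x y i; rfl
  simp only [hsub] at key ⊢
  -- the relation between the two inner products
  have hrel : ∑ i, gradient f q i * (p i - q i)
      = ∑ i, gradient f q i * (plam i - q i)
        + ∑ i, gradient f plam i * (p i - plam i)
        + ∑ i, (∑ j, A i j * lam j) * (p i - plam i) := by
    have : ∀ i, gradient f plam i = gradient f q i - ∑ j, A i j * lam j := hgrad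
    calc ∑ i, gradient f q i * (p i - q i)
        = ∑ i, (gradient f q i * (plam i - q i)
          + (gradient f q i - ∑ j, A i j * lam j) * (p i - plam i)
          + (∑ j, A i j * lam j) * (p i - plam i)) := by
          apply Finset.sum_congr rfl; intro i _; ring
      _ = _ := by
          rw [Finset.sum_add_distrib, Finset.sum_add_distrib]
          congr 1
          congr 1
          apply Finset.sum_congr rfl; intro i _; rw [← this i]
  have hlast : ∑ i, (∑ j, A i j * lam j) * (p i - plam i)
      = - ∑ j, (∑ i, A i j * plam i - b j) * lam j := by
    have h1 : ∑ i, (∑ j, A i j * lam j) * (p i - plam i)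
        = ∑ j, (∑ i, A i j * (p i - plam i)) * lam j := by
      calc ∑ i, (∑ j, A i j * lam j) * (p i - plam i)
          = ∑ i, ∑ j, A i j * lam j * (p i - plam i) := by
            apply Finset.sum_congr rfl; intro i _; rw [Finset.sum_mul]
        _ = ∑ j, ∑ i, A i j * lam j * (p i - plam i) := Finset.sum_comm
        _ = ∑ j, (∑ i, A i j * (p i - plam i)) * lam j := by
            apply Finset.sum_congr rfl; intro j _
            rw [Finset.sum_mul]
            apply Finset.sum_congr rfl; intro i _; ring
    rw [h1, ← Finset.sum_neg_distrib]
    apply Finset.sum_congr rfl; intro j _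
    have : ∑ i, A i j * (p i - plam i) = b j - ∑ i, A i j * plam i := by
      rw [← hAp j, ← Finset.sum_sub_distrib]
      apply Finset.sum_congr rfl; intro i _; ring
    rw [this]; ring
  rw [hlast] at hrel
  linarith [key, hrel]
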